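/- Let d be a positive odd integer divisible by 3, let r be a positive odd integer, and let a and b be fixed integers with a ≡ 1 (mod 12) and b = 2^d * a - 3^r. Then the equation a*x^d - y^2 - z^2 + x*y*z - b = 0 has no integer solution (x, y, z) with x ≡ 1 (mod 12) or x ≡ 9 (mod 12). -/

import Mathlib

open NumberTheorySymbols


/-- Let `d` be a positive odd integer divisible by `3`, `r` a positive odd
integer, and `a`, `b` integers with `a ≡ 1 (mod 12)` and `b = 2^d * a - 3^r`.
Then `a*x^d - y² - z² + x*y*z - b = 0` has no integer solution with
`x ≡ 1 (mod 12)` or `x ≡ 9 (mod 12)`. -/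
theorem no_solution_x_one_or_nine (d : ℕ) (hd : 0 < d) (hodd : Odd d) (h3 : 3 ∣ d)
    (r : ℕ) (hr : 0 < r) (hrodd : Odd r)
    (a b : ℤ) (ha : a % 12 = 1) (hb : b = 2 ^ d * a - 3 ^ r) :
    ¬ ∃ x y z : ℤ, (x % 12 = 1 ∨ x % 12 = 9) ∧
      a * x ^ d - y ^ 2 - z ^ 2 + x * y * z - b = 0 := by
  rintro ⟨x, y, z, hx, heq⟩
  -- common: (x-2) ∣ (y-z)^2 - 3^r
  obtain ⟨c, hc⟩ := sub_dvd_pow_sub_pow x 2 d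
  have hdvd : (x - 2) ∣ (y - z) ^ 2 - 3 ^ r :=
    ⟨a * c + y * z, by linear_combination a * hc - heq - hb⟩
  rcases hx with hx | hx
  · -- case x ≡ 1 mod 12 : work mod 3
    have ha3 : ((a - 1 : ℤ) : ZMod 3) = 0 := by
      rw [ZMod.intCast_zmod_eq_zero_iff_dvd]; omega
    have hx3 : ((x - 1 : ℤ) : ZMod 3) = 0 := by
      rw [ZMod.intCast_zmod_eq_zero_iff_dvd]; omega
    push_cast at ha3 hx3
    have ha3' : (a : ZMod 3) = 1 := by linear_combination ha3
    have hx3' : (x : ZMod 3) = 1 := by linear_combination hx3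
    have h0 : ((a * x ^ d - y ^ 2 - z ^ 2 + x * y * z - b : ℤ) : ZMod 3) = 0 := by
      rw [heq]; simp
    push_cast [hb] at h0
    rw [ha3', hx3', one_pow] at h0
    have h2 : (2 : ZMod 3) = -1 := by decide
    have h3r : (3 : ZMod 3) ^ r = 0 := by
      rw [show (3 : ZMod 3) = 0 by decide, zero_pow hr.ne']
    rw [h2, hodd.neg_one_pow, h3r] at h0
    revert h0
    generalize (y : ZMod 3) = Y
    generalize (z : ZMod 3) = Z
    revert Y Z; decide
  · -- case x ≡ 9 mod 12 : Jacobi symbol mod |x - 2|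
    have key : ∀ n : ℕ, (n : ℤ) ∣ (y - z) ^ 2 - 3 ^ r → n % 3 ≠ 0 → J(3 | n) = -1 → False := by
      intro n hdvd' hn3 hJ3
      have hgyz : Int.gcd (y - z) n = 1 := by
        by_contra h
        obtain ⟨p, hp, hpd⟩ := Nat.exists_prime_and_dvd h
        have hpn : (p : ℤ) ∣ (n : ℤ) :=
          (Int.natCast_dvd_natCast.mpr hpd).trans (Int.gcd_dvd_right _ _)
        have hpyz : (p : ℤ) ∣ (y - z) :=
          (Int.natCast_dvd_natCast.mpr hpd).trans (Int.gcd_dvd_left _ _)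
        have hp3 : (p : ℤ) ∣ 3 ^ r := by
          have h1 : (p : ℤ) ∣ (y - z) ^ 2 := dvd_pow hpyz (by norm_num)
          simpa using dvd_sub h1 (hpn.trans hdvd')
        have hp3' : (p : ℤ) ∣ 3 := Int.Prime.dvd_pow' (by exact_mod_cast hp) hp3
        have hp3'' : p ∣ 3 := by exact_mod_cast hp3'
        have hpn' : p ∣ n := by exact_mod_cast hpn
        have : p = 3 := (Nat.prime_dvd_prime_iff_eq hp Nat.prime_three).mp hp3''
        subst this
        omega
      have e1 : J((y - z) ^ 2 | n) = 1 := jacobiSym.sq_one' hgyz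
      have e2 : J((y - z) ^ 2 | n) = J(3 ^ r | n) :=
        jacobiSym.mod_left' ((Int.modEq_iff_dvd.mpr hdvd').symm)
      have e3 : J((3 : ℤ) ^ r | n) = J(3 | n) ^ r := jacobiSym.pow_left 3 r n
      rw [e2, e3, hJ3, hrodd.neg_one_pow] at e1
      exact absurd e1 (by norm_num)
    rcases lt_or_gt_of_ne (show x ≠ 2 by omega) with hlt | hgt
    · -- x < 2, use n = 2 - x ≡ 5 mod 12
      obtain ⟨n, hnz⟩ : ∃ n : ℕ, (n : ℤ) = 2 - x :=
        ⟨(2 - x).toNat, Int.toNat_of_nonneg (by omega)⟩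
      have hn4 : n % 4 = 1 := by omega
      have hn3 : n % 3 = 2 := by omega
      refine key n ?_ (by omega) ?_
      · rw [hnz, show (2 - x : ℤ) = -(x - 2) by ring]
        exact (neg_dvd).mpr hdvd
      · have h := jacobiSym.quadratic_reciprocity_one_mod_four' (by decide : Odd 3) hn4
        rw [show (((3 : ℕ) : ℤ)) = (3 : ℤ) by norm_num] at h
        rw [h, jacobiSym.mod_left]
        have h2 : ((n : ℤ)) % (((3:ℕ)) : ℤ) = 2 := by push_cast; omega
        rw [h2, jacobiSym.at_two (by decide : Odd 3)]
        decide
    · -- x > 2, use n = x - 2 ≡ 7 mod 12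
      obtain ⟨n, hnz⟩ : ∃ n : ℕ, (n : ℤ) = x - 2 :=
        ⟨(x - 2).toNat, Int.toNat_of_nonneg (by omega)⟩
      have hn4 : n % 4 = 3 := by omega
      have hn3 : n % 3 = 1 := by omega
      refine key n (hnz ▸ hdvd) (by omega) ?_
      have h := jacobiSym.quadratic_reciprocity_three_mod_four (by decide : 3 % 4 = 3) hn4
      rw [show (((3 : ℕ) : ℤ)) = (3 : ℤ) by norm_num] at h
      rw [h, jacobiSym.mod_left]
      have h2 : ((n : ℤ)) % (((3:ℕ)) : ℤ) = 1 := by push_cast; omega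
      rw [h2, jacobiSym.one_left]
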